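/- Let Q be a type A Dynkin quiver with linearly ordered vertices and all arrows in the same direction, let M be a representation of Q with underlying nilpotent operator φ on V = ⊕Mᵢ, and let (v₁,…,v_d) be a point of a cell C_α^φ of the φ-fixed locus of the Grassmannian with each vᵢ = eᵢ + Σ_{j≠i} xᵢ(j)eⱼ in echelon form with respect to the Jordan basis {eⱼ}. If span(v₁,…,v_d) is a subrepresentation (i.e. a direct sum of graded pieces Nᵢ ⊆ Mᵢ), then each vᵢ lies in a single graded piece M_{t(i)}; conversely if each vᵢ lies in some M_t then span(v₁,…,v_d) is a subrepresentation. -/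

import Mathlib

/- Setup (Shimomura cells for the φ-fixed locus of the Grassmannian): `V = ⊕ᵢ Mᵢ` is
graded by the vertices of an equioriented type A quiver, `φ` is the nilpotent operator
built from the arrow maps (so `φ(Mᵢ) ⊆ M_{i+1}`), `e` is a Jordan basis of `φ`
compatible with the grading, and `(v₁,…,v_d)` is a point of a cell `C_α^φ` written in
echelon form with respect to `e`. -/

/-- If `span(v₁,…,v_d)` is a subrepresentation — i.e. it is the direct sum
of graded pieces `Nᵢ ⊆ Mᵢ` — then each `vᵢ` lies in a single graded piece `M_{t(i)}`;
conversely, if each `vᵢ` lies in some `M_t`, then the span is a subrepresentation. -/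
theorem stmt_17 {V : Type*} [AddCommGroup V] [Module ℂ V]
    (M : ℕ → Submodule ℂ V)
    (hindep : iSupIndep M) (htop : (⨆ r, M r) = ⊤)
    (φ : V →ₗ[ℂ] V) (hgrade : ∀ r : ℕ, (M r).map φ ≤ M (r + 1))
    {ι : Type*} (e : Module.Basis ι ℂ V) (g : ι → ℕ) (he : ∀ j, e j ∈ M (g j))
    (hJordan : ∀ j : ι, φ (e j) = 0 ∨ ∃ j' : ι, φ (e j) = e j')
    {d : ℕ} (v : Fin d → V)
    (hcell : ∀ i : Fin d, φ (v i) = 0 ∨ ∃ i' : Fin d, φ (v i) = v i')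
    (pivot : Fin d → ι) (hpiv : Function.Injective pivot)
    (hechelon : ∀ i i' : Fin d,
      e.repr (v i) (pivot i') = if i = i' then 1 else 0) :
    (Submodule.span ℂ (Set.range v) =
        ⨆ r : ℕ, (Submodule.span ℂ (Set.range v) ⊓ M r))
      ↔ (∀ i : Fin d, ∃ r : ℕ, v i ∈ M r) := by
  classical
  set S := Submodule.span ℂ (Set.range v) with hSdef
  -- The graded pieces are exactly the spans of the basis vectors of the right degree.
  set N : ℕ → Submodule ℂ V := fun r => Submodule.span ℂ (e '' (g ⁻¹' {r})) with hNdef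
  have hN_le : ∀ r, N r ≤ M r := by
    intro r
    rw [hNdef, Submodule.span_le]
    rintro _ ⟨j, hj, rfl⟩
    exact hj ▸ he j
  have hNtop : (⨆ r, N r) = ⊤ := by
    refine le_antisymm le_top ?_
    rw [← e.span_eq, Submodule.span_le]
    rintro _ ⟨j, rfl⟩
    exact Submodule.mem_iSup_of_mem (g j)
      (Submodule.subset_span ⟨j, rfl, rfl⟩)
  have hMN : ∀ r, M r = N r := by
    intro r
    refine le_antisymm ?_ (hN_le r)
    intro x hx
    have hx' : x ∈ ⨆ s, N s := hNtop ▸ Submodule.mem_top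
    obtain ⟨f, hf, hsum⟩ := (Submodule.mem_iSup_iff_exists_finsupp _ _).mp hx'
    have hsub : x - f r ∈ M r := sub_mem hx (hN_le r (hf r))
    have hsub' : x - f r ∈ ⨆ s, ⨆ _ : s ≠ r, M s := by
      have hxr : x - f r = ∑ s ∈ f.support.erase r, f s := by
        by_cases hr : r ∈ f.support
        · rw [← hsum, Finsupp.sum, ← Finset.sum_erase_add _ _ hr]; abel
        · rw [Finsupp.notMem_support_iff.mp hr, sub_zero, ← hsum, Finsupp.sum,
            Finset.erase_eq_of_notMem hr]
      rw [hxr]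
      refine Submodule.sum_mem _ fun s hs => ?_
      exact Submodule.mem_iSup_of_mem s (Submodule.mem_iSup_of_mem
        (Finset.ne_of_mem_erase hs) (hN_le s (hf s)))
    have : x - f r = 0 := (Submodule.disjoint_def.mp (hindep r)) _ hsub hsub'
    exact (sub_eq_zero.mp this) ▸ hf r
  -- Repr of an element of `M r` is supported in degree `r`.
  have hB : ∀ r, ∀ w ∈ M r, ∀ j : ι, g j ≠ r → e.repr w j = 0 := by
    intro r w hw j hj
    rw [hMN] at hw
    by_contra h0
    have hjs : j ∈ (e.repr w).support := Finsupp.mem_support_iff.mpr h0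
    exact hj (e.repr_support_subset_of_mem_span _ hw hjs)
  -- Any element of the span is recovered from its pivot coordinates.
  have hC : ∀ w ∈ S, w = ∑ k, e.repr w (pivot k) • v k := by
    intro w hw
    obtain ⟨c, rfl⟩ := (Submodule.mem_span_range_iff_exists_fun ℂ).mp hw
    have hcoef : ∀ k, e.repr (∑ i, c i • v i) (pivot k) = c k := by
      intro k
      simp [map_sum, Finset.sum_apply', hechelon]
    simp_rw [hcoef]
  constructor
  · -- forward direction
    intro hgr i
    refine ⟨g (pivot i), ?_⟩
    have hvS : v i ∈ S := Submodule.subset_span ⟨i, rfl⟩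
    rw [hgr] at hvS
    obtain ⟨f, hf, hsum⟩ := (Submodule.mem_iSup_iff_exists_finsupp _ _).mp hvS
    -- compute pivot coordinates of the graded components
    have hdelta : ∀ k : Fin d,
        e.repr (f (g (pivot k))) (pivot k) = if i = k then 1 else 0 := by
      intro k
      have h1 : e.repr (v i) (pivot k)
          = f.sum fun s y => e.repr y (pivot k) := by
        rw [← hsum, Finsupp.sum, Finsupp.sum, map_sum, Finset.sum_apply']
      have h2 : (f.sum fun s y => e.repr y (pivot k))
          = e.repr (f (g (pivot k))) (pivot k) :=
        Finsupp.sum_eq_single _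
          (fun s _ hs => hB s (f s) (hf s).2 (pivot k) fun hgs => hs hgs.symm)
          (by simp)
      rw [← hechelon i k, h1, h2]
    have hfS : f (g (pivot i)) ∈ S := (hf _).1
    have hck : ∀ k : Fin d,
        e.repr (f (g (pivot i))) (pivot k) = if i = k then 1 else 0 := by
      intro k
      by_cases hgk : g (pivot k) = g (pivot i)
      · rw [← hgk]; exact hdelta k
      · rw [hB _ _ (hf _).2 (pivot k) hgk]
        have : i ≠ k := fun h => hgk (h ▸ rfl)
        simp [this]
    have hfv : f (g (pivot i)) = v i := by
      rw [hC _ hfS]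
      simp [hck, ite_smul]
    exact hfv ▸ (hf _).2
  · -- converse direction
    intro h
    refine le_antisymm ?_ (iSup_le fun r => inf_le_left)
    rw [hSdef, Submodule.span_le]
    rintro _ ⟨i, rfl⟩
    obtain ⟨r, hr⟩ := h i
    exact Submodule.mem_iSup_of_mem r ⟨Submodule.subset_span ⟨i, rfl⟩, hr⟩
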